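/- The intersection graph of any n c-fat objects in R^d admits a 3-hop spanner with O_{d,c}(n log n) edges. -/

import Mathlib

/-- An axis-aligned hypercube in `ℝ^d` with lower corner `a` and side length `ℓ`. -/
def hcube (d : ℕ) (a : Fin d → ℝ) (ℓ : ℝ) : Set (Fin d → ℝ) :=
  {x | ∀ i, a i ≤ x i ∧ x i ≤ a i + ℓ}

/-- The side length of an object: the side length of its smallest enclosing
axis-aligned hypercube. -/
noncomputable def sideLength (d : ℕ) (u : Set (Fin d → ℝ)) : ℝ :=
  sInf {ℓ : ℝ | 0 ≤ ℓ ∧ ∃ a : Fin d → ℝ, u ⊆ hcube d a ℓ}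

/-- The quadtree cell `[c₁·2^{-k}, (c₁+1)·2^{-k}) × ⋯ × [c_d·2^{-k}, (c_d+1)·2^{-k})`. -/
def qtCell (d : ℕ) (k : ℤ) (c : Fin d → ℤ) : Set (Fin d → ℝ) :=
  {x | ∀ i, (c i : ℝ) * (2 : ℝ) ^ (-k) ≤ x i ∧ x i < ((c i : ℝ) + 1) * (2 : ℝ) ^ (-k)}

/-- `γ` is a quadtree cell. -/
def IsQuadtreeCell (d : ℕ) (γ : Set (Fin d → ℝ)) : Prop :=
  ∃ (k : ℤ) (c : Fin d → ℤ), γ = qtCell d k c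

/-- An object `u` is `C`-aligned if it is contained in a quadtree cell of side length
at most `C` times the side length of `u`. -/
def IsAligned (d : ℕ) (C : ℝ) (u : Set (Fin d → ℝ)) : Prop :=
  ∃ (k : ℤ) (c : Fin d → ℤ),
    (2 : ℝ) ^ (-k) ≤ C * sideLength d u ∧ u ⊆ qtCell d k c

/-- A collection `F` of objects in `ℝ^d` is `c`-fat if for every hypercube `γ` of side
length `ℓ` there exist at most `c` points hitting all members of `F` that intersect `γ`
and have side length at least `ℓ`. -/
def CFat (d c : ℕ) (F : Set (Set (Fin d → ℝ))) : Prop :=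
  ∀ (a : Fin d → ℝ) (ℓ : ℝ), 0 < ℓ →
    ∃ P : Finset (Fin d → ℝ), P.card ≤ c ∧
      ∀ u ∈ F, (u ∩ hcube d a ℓ).Nonempty → ℓ ≤ sideLength d u → ∃ p ∈ P, p ∈ u

/-- `H` is a `t`-hop spanner of `G`. -/
def IsHopSpanner {V : Type*} (G H : SimpleGraph V) (t : ℕ) : Prop :=
  H ≤ G ∧ ∀ u v : V, G.Adj u v → ∃ p : H.Walk u v, p.length ≤ t

namespace FatSpanner


abbrev Cell (d : ℕ) := ℤ × (Fin d → ℤ)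

def cellSet (d : ℕ) (γ : Cell d) : Set (Fin d → ℝ) := qtCell d γ.1 γ.2

/-- containment order on cells (γ ≤ δ : γ is contained in δ). -/
def CellLe {d : ℕ} (γ δ : Cell d) : Prop :=
  δ.1 ≤ γ.1 ∧ ∀ i, (δ.2 i : ℝ) * (2:ℝ) ^ (-δ.1) ≤ (γ.2 i : ℝ) * (2:ℝ) ^ (-γ.1) ∧
    ((γ.2 i : ℝ) + 1) * (2:ℝ) ^ (-γ.1) ≤ ((δ.2 i : ℝ) + 1) * (2:ℝ) ^ (-δ.1)

lemma CellLe.refl {d : ℕ} (γ : Cell d) : CellLe γ γ :=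
  ⟨le_rfl, fun i => ⟨le_rfl, le_rfl⟩⟩

lemma CellLe.trans {d : ℕ} {a b e : Cell d} (h1 : CellLe a b) (h2 : CellLe b e) :
    CellLe a e :=
  ⟨h2.1.trans h1.1, fun i => ⟨(h2.2 i).1.trans (h1.2 i).1, (h1.2 i).2.trans (h2.2 i).2⟩⟩

lemma two_zpow_pos (k : ℤ) : (0:ℝ) < (2:ℝ) ^ k := zpow_pos (by norm_num) k

lemma CellLe.antisymm {d : ℕ} {a b : Cell d} (h1 : CellLe a b) (h2 : CellLe b a) :
    a = b := by
  have hk : a.1 = b.1 := le_antisymm h2.1 h1.1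
  have hc : a.2 = b.2 := by
    funext i
    have e1 := (h1.2 i).1
    have e2 := (h2.2 i).1
    simp only [hk] at e1 e2
    have heq := le_antisymm e2 e1
    have h2p := two_zpow_pos (-b.1)
    have : (a.2 i : ℝ) = (b.2 i : ℝ) := mul_right_cancel₀ (ne_of_gt h2p) heq
    exact_mod_cast this
  exact Prod.ext hk hc

lemma CellLe.subset {d : ℕ} {a b : Cell d} (h : CellLe a b) :
    cellSet d a ⊆ cellSet d b := by
  intro x hx i
  exact ⟨(h.2 i).1.trans (hx i).1, (hx i).2.trans_le (h.2 i).2⟩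

/-- the cell at level k containing the point x -/
noncomputable def cellOf (d : ℕ) (k : ℤ) (x : Fin d → ℝ) : Cell d :=
  (k, fun i => ⌊x i * (2:ℝ) ^ k⌋)

lemma mem_cellOf (d : ℕ) (k : ℤ) (x : Fin d → ℝ) : x ∈ cellSet d (cellOf d k x) := by
  intro i
  have hp := two_zpow_pos (k := k)
  have h1 : (⌊x i * (2:ℝ) ^ k⌋ : ℝ) ≤ x i * (2:ℝ) ^ k := Int.floor_le _
  have h2 : x i * (2:ℝ) ^ k < ⌊x i * (2:ℝ) ^ k⌋ + 1 := Int.lt_floor_add_one _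
  have hinv : (2:ℝ) ^ k * (2:ℝ) ^ (-k) = 1 := by
    rw [← zpow_add₀ (by norm_num : (2:ℝ) ≠ 0)]; simp
  constructor
  · have := mul_le_mul_of_nonneg_right h1 (le_of_lt (two_zpow_pos (-k)))
    calc (⌊x i * (2:ℝ) ^ k⌋ : ℝ) * (2:ℝ) ^ (-k) ≤ x i * (2:ℝ) ^ k * (2:ℝ) ^ (-k) := this
    _ = x i := by rw [mul_assoc, hinv, mul_one]
  · have := mul_lt_mul_of_pos_right h2 (two_zpow_pos (-k))
    calc x i = x i * (2:ℝ) ^ k * (2:ℝ) ^ (-k) := by rw [mul_assoc, hinv, mul_one]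
    _ < ((⌊x i * (2:ℝ) ^ k⌋ : ℝ) + 1) * (2:ℝ) ^ (-k) := this

lemma mem_cell_forced {d : ℕ} {γ : Cell d} {x : Fin d → ℝ} (hx : x ∈ cellSet d γ) :
    γ = cellOf d γ.1 x := by
  refine Prod.ext rfl ?_
  funext i
  have h := hx i
  have hp := two_zpow_pos (k := γ.1)
  have hinv : (2:ℝ) ^ (-γ.1) * (2:ℝ) ^ γ.1 = 1 := by
    rw [← zpow_add₀ (by norm_num : (2:ℝ) ≠ 0)]; simp
  have h1 : (γ.2 i : ℝ) ≤ x i * (2:ℝ) ^ γ.1 := by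
    have := mul_le_mul_of_nonneg_right h.1 (le_of_lt hp)
    calc (γ.2 i : ℝ) = (γ.2 i : ℝ) * (2:ℝ)^(-γ.1) * (2:ℝ)^γ.1 := by
          rw [mul_assoc, hinv, mul_one]
    _ ≤ x i * (2:ℝ) ^ γ.1 := this
  have h2 : x i * (2:ℝ) ^ γ.1 < (γ.2 i : ℝ) + 1 := by
    have := mul_lt_mul_of_pos_right h.2 hp
    calc x i * (2:ℝ)^γ.1 < ((γ.2 i:ℝ)+1) * (2:ℝ)^(-γ.1) * (2:ℝ)^γ.1 := this
    _ = (γ.2 i : ℝ) + 1 := by rw [mul_assoc, hinv, mul_one]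
  symm
  exact Int.floor_eq_iff.mpr ⟨h1, by exact_mod_cast h2⟩

/-- nesting: cells at comparable levels sharing a point are nested. -/
lemma cell_nesting {d : ℕ} {γ δ : Cell d} {x : Fin d → ℝ}
    (hγ : x ∈ cellSet d γ) (hδ : x ∈ cellSet d δ) (hk : δ.1 ≤ γ.1) : CellLe γ δ := by
  refine ⟨hk, fun i => ?_⟩
  -- γ.2 i = ⌊x i * 2^γ.1⌋, δ.2 i = ⌊x i * 2^δ.1⌋
  have hg := mem_cell_forced hγ
  have hd := mem_cell_forced hδ
  set k := γ.1 with hk1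
  set k' := δ.1 with hk2
  have hb : γ.2 i = ⌊x i * (2:ℝ) ^ k⌋ := by rw [hg]; rfl
  have ha : δ.2 i = ⌊x i * (2:ℝ) ^ k'⌋ := by rw [hd]; rfl
  set a : ℤ := ⌊x i * (2:ℝ) ^ k'⌋
  set b : ℤ := ⌊x i * (2:ℝ) ^ k⌋
  have hm : (0:ℤ) ≤ k - k' := sub_nonneg.mpr hk
  -- integer inequalities
  have key1 : a * 2 ^ (k - k').toNat ≤ b := by
    apply Int.le_floor.mpr
    push_cast
    have h1 : (a:ℝ) ≤ x i * (2:ℝ) ^ k' := Int.floor_le _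
    have : (a:ℝ) * 2 ^ (k - k').toNat ≤ x i * (2:ℝ) ^ k' * 2 ^ (k - k').toNat :=
      mul_le_mul_of_nonneg_right h1 (by positivity)
    refine this.trans (le_of_eq ?_)
    rw [mul_assoc, ← zpow_natCast (2:ℝ) (k - k').toNat, ← zpow_add₀ (by norm_num : (2:ℝ) ≠ 0)]
    congr 2
    omega
  have key2 : b < (a + 1) * 2 ^ (k - k').toNat := by
    apply Int.floor_lt.mpr
    push_cast
    have h2 : x i * (2:ℝ) ^ k' < (a:ℝ) + 1 := Int.lt_floor_add_one _
    have : x i * (2:ℝ) ^ k' * 2 ^ (k - k').toNat < ((a:ℝ) + 1) * 2 ^ (k - k').toNat :=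
      mul_lt_mul_of_pos_right h2 (by positivity)
    refine lt_of_eq_of_lt ?_ this
    rw [mul_assoc, ← zpow_natCast (2:ℝ) (k - k').toNat, ← zpow_add₀ (by norm_num : (2:ℝ) ≠ 0)]
    congr 2
    omega
  -- convert to real inequalities
  have hpow : (2:ℝ) ^ (-k') = 2 ^ (k-k').toNat * (2:ℝ) ^ (-k) := by
    rw [← zpow_natCast (2:ℝ) (k - k').toNat, ← zpow_add₀ (by norm_num : (2:ℝ) ≠ 0)]
    congr 1
    omega
  constructor
  · rw [hb, ha, hpow]
    have : ((a * 2 ^ (k - k').toNat : ℤ) : ℝ) ≤ (b : ℝ) := by exact_mod_cast key1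
    push_cast at this
    calc (a:ℝ) * (2 ^ (k-k').toNat * (2:ℝ)^(-k)) = (a:ℝ) * 2 ^ (k-k').toNat * (2:ℝ)^(-k) := by ring
    _ ≤ (b:ℝ) * (2:ℝ)^(-k) := mul_le_mul_of_nonneg_right this (le_of_lt (two_zpow_pos _))
  · rw [hb, ha, hpow]
    have : (b : ℝ) + 1 ≤ ((a + 1) * 2 ^ (k - k').toNat : ℤ) := by exact_mod_cast key2
    push_cast at this
    calc ((b:ℝ)+1) * (2:ℝ)^(-k) ≤ ((a:ℝ)+1) * 2^(k-k').toNat * (2:ℝ)^(-k) :=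
          mul_le_mul_of_nonneg_right this (le_of_lt (two_zpow_pos _))
    _ = ((a:ℝ)+1) * (2^(k-k').toNat * (2:ℝ)^(-k)) := by ring

/-- cells are nonempty: the corner. -/
lemma cell_corner_mem (d : ℕ) (γ : Cell d) :
    (fun i => (γ.2 i : ℝ) * (2:ℝ) ^ (-γ.1)) ∈ cellSet d γ := by
  intro i
  refine ⟨le_rfl, ?_⟩
  have h := two_zpow_pos (-γ.1)
  have : (γ.2 i : ℝ) * (2:ℝ)^(-γ.1) < ((γ.2 i : ℝ)+1) * (2:ℝ)^(-γ.1) := by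
    apply mul_lt_mul_of_pos_right _ h
    linarith
  exact this

/-- upward chain property -/
lemma cell_chain {d : ℕ} {a b b' : Cell d} (h1 : CellLe a b) (h2 : CellLe a b') :
    CellLe b b' ∨ CellLe b' b := by
  have hx := cell_corner_mem d a
  have hxb := h1.subset hx
  have hxb' := h2.subset hx
  rcases le_total b'.1 b.1 with h | h
  · exact Or.inl (cell_nesting hxb hxb' h)
  · exact Or.inr (cell_nesting hxb' hxb h)

lemma CellLe.side_le {d : ℕ} {a b : Cell d} (h : CellLe a b) :
    (2:ℝ) ^ (-a.1) ≤ (2:ℝ) ^ (-b.1) :=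
  zpow_le_zpow_right₀ (by norm_num) (by have := h.1; omega)




lemma coverSet_nonempty {d : ℕ} {u : Set (Fin d → ℝ)} (hbd : Bornology.IsBounded u) :
    {ℓ : ℝ | 0 ≤ ℓ ∧ ∃ a : Fin d → ℝ, u ⊆ hcube d a ℓ}.Nonempty := by
  obtain ⟨C, hC⟩ := hbd.exists_norm_le
  refine ⟨2 * max C 0, ⟨by positivity, fun _ => -(max C 0), fun x hx i => ?_⟩⟩
  have h1 : ‖x‖ ≤ C := hC x hx
  have h2 : |x i| ≤ ‖x‖ := by
    have := norm_le_pi_norm x i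
    simpa using this
  have : |x i| ≤ max C 0 := by
    refine (h2.trans h1).trans (le_max_left _ _)
  rw [abs_le] at this
  constructor <;> simp <;> linarith [this.1, this.2]

lemma sideLength_nonneg (d : ℕ) (u : Set (Fin d → ℝ)) : 0 ≤ sideLength d u :=
  Real.sInf_nonneg (fun _ h => h.1)

lemma exists_cover {d : ℕ} {u : Set (Fin d → ℝ)} (hbd : Bornology.IsBounded u)
    {ε : ℝ} (hε : 0 < ε) :
    ∃ ℓ a, 0 ≤ ℓ ∧ ℓ < sideLength d u + ε ∧ u ⊆ hcube d a ℓ := by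
  have hne := coverSet_nonempty hbd
  have hbdd : BddBelow {ℓ : ℝ | 0 ≤ ℓ ∧ ∃ a : Fin d → ℝ, u ⊆ hcube d a ℓ} :=
    ⟨0, fun _ h => h.1⟩
  have : sideLength d u < sideLength d u + ε := by linarith
  obtain ⟨ℓ, hℓ, hlt⟩ := (csInf_lt_iff hbdd hne).mp this
  exact ⟨ℓ, hℓ.2.choose, hℓ.1, hlt, hℓ.2.choose_spec⟩

lemma sideLength_zero_subsingleton {d : ℕ} {u : Set (Fin d → ℝ)}
    (hbd : Bornology.IsBounded u) (h0 : sideLength d u = 0)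
    {x y : Fin d → ℝ} (hx : x ∈ u) (hy : y ∈ u) : x = y := by
  funext i
  by_contra hne
  have habs : 0 < |x i - y i| := by
    rw [abs_pos]
    intro h
    exact hne (by linarith [sub_eq_zero.mp h])
  obtain ⟨ℓ, a, hl0, hlt, hsub⟩ := exists_cover hbd habs
  rw [h0, zero_add] at hlt
  have h1 := hsub hx i
  have h2 := hsub hy i
  rcases abs_cases (x i - y i) with ⟨he, _⟩ | ⟨he, _⟩ <;> rw [he] at hlt <;>
    linarith [h1.1, h1.2, h2.1, h2.2]




variable {α : Type*} in

lemma listSumSingle {β : Type*} (cs : List β) (t : β → ℕ) (c₀ : β) (hnd : cs.Nodup)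
    (h0 : ∀ c ∈ cs, c ≠ c₀ → t c = 0) : (cs.map t).sum ≤ t c₀ := by
  induction cs with
  | nil => simp
  | cons c cs ih =>
    simp only [List.map_cons, List.sum_cons]
    rcases List.nodup_cons.mp hnd with ⟨hc, hnd'⟩
    by_cases hcc : c = c₀
    · subst hcc
      have : ∀ c' ∈ cs, t c' = 0 := by
        intro c' hc'
        refine h0 c' (List.mem_cons_of_mem _ hc') (fun he => hc (he ▸ hc'))
      have : (cs.map t).sum = 0 := by
        apply List.sum_eq_zero
        intro x hx
        obtain ⟨c', hc', rfl⟩ := List.mem_map.mp hx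
        exact this c' hc'
      omega
    · have h1 : t c = 0 := h0 c List.mem_cons_self hcc
      have h2 := ih hnd' (fun c' hc' => h0 c' (List.mem_cons_of_mem _ hc'))
      omega

open Classical in
theorem decomp (le : α → α → Prop) (hrefl : ∀ a, le a a)
    (htrans : ∀ {a b c}, le a b → le b c → le a c)
    (hanti : ∀ {a b}, le a b → le b a → a = b)
    (hchain : ∀ {a b b'}, le a b → le a b' → le b b' ∨ le b' b) :
    ∀ M : Finset α, ∃ L : List (Finset α × α),
      (∀ pg ∈ L, pg.2 ∈ pg.1 ∧ pg.1 ⊆ M) ∧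
      (∀ a ∈ M, ∀ b ∈ M, le a b →
        ∃ pg ∈ L, a ∈ pg.1 ∧ b ∈ pg.1 ∧ le a pg.2 ∧ le pg.2 b) ∧
      (∀ γ ∈ M, ∀ fι : Finset α × α → ℕ, (∀ pg, fι pg ≤ 1) →
        (∀ pg, 1 ≤ fι pg → γ ∈ pg.1 ∧ (le γ pg.2 ∨ le pg.2 γ)) →
        (L.map fι).sum ≤ Nat.log 2 M.card + 1) := by
  intro M
  induction M using Finset.strongInduction with
  | _ M IH =>
  classical
  rcases eq_or_ne M ∅ with rfl | hMne
  · exact ⟨[], by simp, by simp, by simp⟩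
  have hMne' : M.Nonempty := Finset.nonempty_iff_ne_empty.mpr hMne
  set h : ℕ := M.card / 2 with hh
  set Dbar : α → Finset α := fun a => M.filter (fun b => le b a) with hDbar
  have hDbarsub : ∀ a, Dbar a ⊆ M := fun a => Finset.filter_subset _ _
  have hDbarmono : ∀ {a b}, a ∈ M → le a b → Dbar a ⊆ Dbar b := by
    intro a b ha hab x hx
    rcases Finset.mem_filter.mp hx with ⟨hxM, hxa⟩
    exact Finset.mem_filter.mpr ⟨hxM, htrans hxa hab⟩
  have hDbarlt : ∀ {a b}, a ∈ M → b ∈ M → le a b → a ≠ b →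
      (Dbar a).card < (Dbar b).card := by
    intro a b ha hb hab hne
    apply Finset.card_lt_card
    refine ⟨hDbarmono ha hab, fun hsub => ?_⟩
    have hbb : b ∈ Dbar b := Finset.mem_filter.mpr ⟨hb, hrefl b⟩
    have : b ∈ Dbar a := hsub hbb
    exact hne (hanti (Finset.mem_filter.mp this).2 hab).symm
  -- choose the centroid g
  have hg : ∃ g ∈ M, (∀ a ∈ M, le a g → a ≠ g → (Dbar a).card ≤ h) ∧
      (h + 1 ≤ (Dbar g).card ∨ ∀ b ∈ M, le g b → b = g) := by
    set S : Finset α := M.filter (fun a => h + 1 ≤ (Dbar a).card) with hS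
    rcases eq_or_ne S ∅ with hSe | hSne
    · obtain ⟨g, hgM, hgmax⟩ := Finset.exists_max_image M (fun a => (Dbar a).card) hMne'
      refine ⟨g, hgM, ?_, Or.inr ?_⟩
      · intro a haM _ _
        by_contra hcon
        have : a ∈ S := Finset.mem_filter.mpr ⟨haM, by omega⟩
        rw [hSe] at this
        exact absurd this (Finset.notMem_empty a)
      · intro b hbM hgb
        by_contra hne
        exact absurd (hgmax b hbM) (by
          have := hDbarlt hgM hbM hgb (fun he => hne he.symm)
          omega)
    · obtain ⟨g, hgS, hgmin⟩ := Finset.exists_min_image S (fun a => (Dbar a).card)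
        (Finset.nonempty_iff_ne_empty.mpr hSne)
      rcases Finset.mem_filter.mp hgS with ⟨hgM, hgcard⟩
      refine ⟨g, hgM, ?_, Or.inl hgcard⟩
      intro a haM hag hne
      by_contra hcon
      have haS : a ∈ S := Finset.mem_filter.mpr ⟨haM, by omega⟩
      have h1 := hgmin a haS
      have h2 := hDbarlt haM hgM hag hne
      omega
  obtain ⟨g, hgM, hG3, hAB⟩ := hg
  set U : Finset α := M.filter (fun a => ¬ le a g) with hU
  set Dset : Finset α := M.filter (fun a => le a g ∧ a ≠ g) with hDset
  have hgU : g ∉ U := fun hc => (Finset.mem_filter.mp hc).2 (hrefl g)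
  have hgD : g ∉ Dset := fun hc => (Finset.mem_filter.mp hc).2.2 rfl
  -- the "maximal element below g above a" function
  set chT : α → α := fun a =>
    if hx : ∃ m, m ∈ Dset ∧ le a m ∧ ∀ b ∈ Dset, le a b → le b m then hx.choose else a
    with hchT
  have hch : ∀ a ∈ Dset, (chT a) ∈ Dset ∧ le a (chT a) ∧
      ∀ b ∈ Dset, le a b → le b (chT a) := by
    intro a ha
    have hex : ∃ m, m ∈ Dset ∧ le a m ∧ ∀ b ∈ Dset, le a b → le b m := by
      obtain ⟨m, hm, hmmax⟩ := Finset.exists_max_image (Dset.filter (fun b => le a b))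
        (fun b => (Dbar b).card) ⟨a, Finset.mem_filter.mpr ⟨ha, hrefl a⟩⟩
      rcases Finset.mem_filter.mp hm with ⟨hmD, ham⟩
      refine ⟨m, hmD, ham, ?_⟩
      intro b hbD hab
      rcases hchain ham hab with hmb | hbm
      · rcases eq_or_ne m b with rfl | hne
        · exact hrefl m
        · exfalso
          have hlt := hDbarlt (Finset.mem_of_mem_filter m hmD)
            (Finset.mem_of_mem_filter b hbD) hmb hne
          have := hmmax b (Finset.mem_filter.mpr ⟨hbD, hab⟩)
          omega
      · exact hbm
    simp only [hchT, dif_pos hex]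
    exact hex.choose_spec
  have hcheq : ∀ a ∈ Dset, ∀ b ∈ Dset, le a b → chT a = chT b := by
    intro a ha b hb hab
    obtain ⟨ha1, ha2, ha3⟩ := hch a ha
    obtain ⟨hb1, hb2, hb3⟩ := hch b hb
    have h1 : le (chT b) (chT a) := ha3 (chT b) hb1 (htrans hab hb2)
    have h2 : le (chT a) (chT b) := hb3 (chT a) ha1 (ha3 b hb hab)
    exact hanti h2 h1
  set children : Finset α := Dset.image chT with hchildren
  set part : α → Finset α := fun c => Dset.filter (fun a => chT a = c) with hpart
  -- proper subsets for recursion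
  have hUss : U ⊂ M := ⟨Finset.filter_subset _ _, fun hsub => hgU (hsub hgM)⟩
  have hpartss : ∀ c, part c ⊂ M := by
    intro c
    refine ⟨(Finset.filter_subset _ _).trans (Finset.filter_subset _ _), fun hsub => ?_⟩
    have := hsub hgM
    exact hgD (Finset.mem_of_mem_filter _ this)
  obtain ⟨LU, hLU1, hLU2, hLU3⟩ := IH U hUss
  have hLc : ∀ c : α, ∃ Lc : List (Finset α × α),
      (∀ pg ∈ Lc, pg.2 ∈ pg.1 ∧ pg.1 ⊆ part c) ∧
      (∀ a ∈ part c, ∀ b ∈ part c, le a b →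
        ∃ pg ∈ Lc, a ∈ pg.1 ∧ b ∈ pg.1 ∧ le a pg.2 ∧ le pg.2 b) ∧
      (∀ γ ∈ part c, ∀ fι : Finset α × α → ℕ, (∀ pg, fι pg ≤ 1) →
        (∀ pg, 1 ≤ fι pg → γ ∈ pg.1 ∧ (le γ pg.2 ∨ le pg.2 γ)) →
        (Lc.map fι).sum ≤ Nat.log 2 (part c).card + 1) := fun c => IH (part c) (hpartss c)
  choose f hf1 hf2 hf3 using hLc
  set L : List (Finset α × α) := (M, g) :: (LU ++ (children.toList.map f).flatten) with hL
  refine ⟨L, ?_, ?_, ?_⟩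
  · -- structure
    intro pg hpg
    rcases List.mem_cons.mp hpg with rfl | hpg
    · exact ⟨hgM, le_refl M⟩
    rcases List.mem_append.mp hpg with hpg | hpg
    · exact ⟨(hLU1 pg hpg).1, (hLU1 pg hpg).2.trans hUss.1⟩
    · obtain ⟨l, hl, hpgl⟩ := List.mem_flatten.mp hpg
      obtain ⟨cc, hcc, rfl⟩ := List.mem_map.mp hl
      exact ⟨(hf1 cc pg hpgl).1, (hf1 cc pg hpgl).2.trans (hpartss cc).1⟩
  · -- cover
    intro a haM b hbM hab
    by_cases h1 : le a g ∧ le g b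
    · exact ⟨(M, g), List.mem_cons_self, haM, hbM, h1.1, h1.2⟩
    by_cases hag : le a g
    · rcases eq_or_ne a g with rfl | hane
      · exact absurd ⟨hrefl a, hab⟩ h1
      have haD : a ∈ Dset := Finset.mem_filter.mpr ⟨haM, hag, hane⟩
      have hbD : b ∈ Dset := by
        rcases hchain hag hab with hgb | hbg
        · exact absurd ⟨hag, hgb⟩ h1
        rcases eq_or_ne b g with rfl | hbne
        · exact absurd ⟨hag, hrefl b⟩ h1
        exact Finset.mem_filter.mpr ⟨hbM, hbg, hbne⟩
      set c := chT a with hc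
      have hceq : chT b = c := (hcheq a haD b hbD hab).symm
      have haP : a ∈ part c := Finset.mem_filter.mpr ⟨haD, rfl⟩
      have hbP : b ∈ part c := Finset.mem_filter.mpr ⟨hbD, hceq⟩
      obtain ⟨pg, hpg, hrest⟩ := hf2 c a haP b hbP hab
      refine ⟨pg, ?_, hrest⟩
      refine List.mem_cons_of_mem _ (List.mem_append_right _ ?_)
      refine List.mem_flatten.mpr ⟨f c, List.mem_map.mpr ⟨c, ?_, rfl⟩, hpg⟩
      exact Finset.mem_toList.mpr (Finset.mem_image.mpr ⟨a, haD, rfl⟩)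
    · have haU : a ∈ U := Finset.mem_filter.mpr ⟨haM, hag⟩
      have hbU : b ∈ U := by
        refine Finset.mem_filter.mpr ⟨hbM, fun hbg => hag (htrans hab hbg)⟩
      obtain ⟨pg, hpg, hrest⟩ := hLU2 a haU b hbU hab
      exact ⟨pg, List.mem_cons_of_mem _ (List.mem_append_left _ hpg), hrest⟩
  · -- count
    intro γ hγM fι hfb hfc
    have hzero : ∀ (L' : List (Finset α × α)) (Q : Finset α),
        (∀ pg ∈ L', pg.2 ∈ pg.1 ∧ pg.1 ⊆ Q) → γ ∉ Q → (L'.map fι).sum = 0 := by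
      intro L' Q hstr hnQ
      apply List.sum_eq_zero
      intro x hx
      obtain ⟨pg, hpg, rfl⟩ := List.mem_map.mp hx
      rcases Nat.eq_zero_or_pos (fι pg) with h0 | h1
      · exact h0
      · exact absurd ((hstr pg hpg).2 (hfc pg h1).1) hnQ
    have hsum : (L.map fι).sum = fι (M, g) + (LU.map fι).sum +
        ((children.toList.map f).flatten.map fι).sum := by
      simp [hL, List.map_append, List.sum_append]
      ring
    have hflat : ((children.toList.map f).flatten.map fι).sum =
        ((children.toList.map (fun c => ((f c).map fι).sum))).sum := by
      rw [List.map_flatten, List.sum_flatten, List.map_map, List.map_map]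
      rfl
    rcases eq_or_ne γ g with rfl | hγg
    · have hU0 : (LU.map fι).sum = 0 := hzero LU U hLU1 hgU
      have hparts0 : ((children.toList.map (fun c => ((f c).map fι).sum))).sum = 0 := by
        apply List.sum_eq_zero
        intro x hx
        obtain ⟨cc, hcc, rfl⟩ := List.mem_map.mp hx
        exact hzero (f cc) (part cc) (hf1 cc) (fun hc => hgD (Finset.mem_of_mem_filter _ hc))
      rw [hsum, hflat, hparts0, hU0]
      have := hfb (M, γ)
      omega
    have hMcard2 : 2 ≤ M.card := by
      have : ({γ, g} : Finset α) ⊆ M := by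
        intro x hx
        rcases Finset.mem_insert.mp hx with rfl | hx
        · exact hγM
        · exact (Finset.mem_singleton.mp hx) ▸ hgM
      calc 2 = ({γ, g} : Finset α).card := (Finset.card_pair hγg).symm
      _ ≤ M.card := Finset.card_le_card this
    have hlogM : 0 < Nat.log 2 M.card := Nat.log_pos (by norm_num) hMcard2
    have hloghalf : Nat.log 2 h + 1 ≤ Nat.log 2 M.card := by
      have h1 := Nat.log_div_base 2 M.card
      have h2 : Nat.log 2 h = Nat.log 2 (M.card / 2) := by rw [hh]
      omega
    by_cases hγU : γ ∈ U
    · have hparts0 : ((children.toList.map (fun c => ((f c).map fι).sum))).sum = 0 := by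
        apply List.sum_eq_zero
        intro x hx
        obtain ⟨cc, hcc, rfl⟩ := List.mem_map.mp hx
        refine hzero (f cc) (part cc) (hf1 cc) (fun hc => ?_)
        exact (Finset.mem_filter.mp hγU).2 (Finset.mem_filter.mp
          (Finset.mem_of_mem_filter γ hc : γ ∈ Dset)).2.1
      have hUbound : (LU.map fι).sum ≤ Nat.log 2 U.card + 1 := hLU3 γ hγU fι hfb hfc
      rcases hAB with hA | hB
      · have hUcard : U.card ≤ h := by
          have hUeq : U = M \ Dbar g := by
            ext x
            simp only [hU, hDbar, Finset.mem_filter, Finset.mem_sdiff]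
            tauto
          rw [hUeq, Finset.card_sdiff_of_subset (hDbarsub g)]
          omega
        have hUb2 : (LU.map fι).sum ≤ Nat.log 2 h + 1 :=
          hUbound.trans (by
            have := Nat.log_mono_right (b := 2) hUcard
            omega)
        rw [hsum, hflat, hparts0]
        have hp1 := hfb (M, g)
        omega
      · have hpg0 : fι (M, g) = 0 := by
          rcases Nat.eq_zero_or_pos (fι (M, g)) with h0 | h1
          · exact h0
          rcases (hfc _ h1).2 with hle | hle
          · exact absurd hle (Finset.mem_filter.mp hγU).2
          · exact absurd (hB γ hγM hle) hγg
        have hUb2 : (LU.map fι).sum ≤ Nat.log 2 M.card + 1 :=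
          hUbound.trans (by
            have := Nat.log_mono_right (b := 2) (Finset.card_le_card hUss.subset)
            omega)
        rw [hsum, hflat, hparts0, hpg0]
        omega
    · have hγD : γ ∈ Dset := by
        have : le γ g := by
          by_contra hc
          exact hγU (Finset.mem_filter.mpr ⟨hγM, hc⟩)
        exact Finset.mem_filter.mpr ⟨hγM, this, hγg⟩
      have hU0 : (LU.map fι).sum = 0 := hzero LU U hLU1 hγU
      have hγP : γ ∈ part (chT γ) := Finset.mem_filter.mpr ⟨hγD, rfl⟩
      have hpartbound : ((f (chT γ)).map fι).sum ≤ Nat.log 2 h + 1 := by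
        have h1 : ((f (chT γ)).map fι).sum ≤ Nat.log 2 (part (chT γ)).card + 1 :=
          hf3 (chT γ) γ hγP fι hfb hfc
        have hc1 : chT γ ∈ Dset := (hch γ hγD).1
        rcases Finset.mem_filter.mp hc1 with ⟨hcM, hcg, hcne⟩
        have hsub : part (chT γ) ⊆ Dbar (chT γ) := by
          intro x hx
          rcases Finset.mem_filter.mp hx with ⟨hxD, hxc⟩
          refine Finset.mem_filter.mpr ⟨(Finset.mem_filter.mp hxD).1, ?_⟩
          exact hxc ▸ (hch x hxD).2.1
        have hcard : (part (chT γ)).card ≤ h :=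
          (Finset.card_le_card hsub).trans (hG3 (chT γ) hcM hcg hcne)
        have := Nat.log_mono_right (b := 2) hcard
        omega
      have hsingle : ((children.toList.map (fun c => ((f c).map fι).sum))).sum ≤
          ((f (chT γ)).map fι).sum := by
        apply listSumSingle _ _ _ (Finset.nodup_toList children)
        intro c _ hne
        refine hzero (f c) (part c) (hf1 c) (fun hc => ?_)
        exact hne ((Finset.mem_filter.mp hc).2).symm
      rw [hsum, hflat, hU0]
      have hp1 := hfb (M, g)
      omega



lemma cell_subset_hcube (d : ℕ) (γ : Cell d) :
    cellSet d γ ⊆ hcube d (fun t => (γ.2 t : ℝ) * (2:ℝ)^(-γ.1)) ((2:ℝ)^(-γ.1)) := by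
  intro x hx t
  refine ⟨(hx t).1, ?_⟩
  show x t ≤ (γ.2 t : ℝ) * (2:ℝ)^(-γ.1) + (2:ℝ)^(-γ.1)
  nlinarith [(hx t).2]

theorem main_aux (d c n : ℕ) (obj : Fin n → Set (Fin d → ℝ))
    (hne : ∀ i, (obj i).Nonempty) (hbd : ∀ i, Bornology.IsBounded (obj i))
    (hfat : CFat d c (Set.range obj)) :
    ∃ E : Finset (Fin n × Fin n),
      (∀ e ∈ E, e.1 ≠ e.2 → (obj e.1 ∩ obj e.2).Nonempty) ∧
      (∀ i j : Fin n, i ≠ j → (obj i ∩ obj j).Nonempty →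
        ∃ p : (SimpleGraph.fromRel fun a b => (a, b) ∈ E).Walk i j, p.length ≤ 3) ∧
      E.card ≤ n + 2 * c * 3^d * (Nat.log 2 (3^d * n) + 1) * n := by
  classical
  set s : Fin n → ℝ := fun i => sideLength d (obj i) with hs
  have hs0 : ∀ i, 0 ≤ s i := fun i => sideLength_nonneg d (obj i)
  have hkex : ∀ i : Fin n, ∃ k : ℤ, 0 < s i → ((2:ℝ)^(-k) ≤ s i ∧ s i < 2^(1-k)) := by
    intro i
    by_cases h : 0 < s i
    · obtain ⟨m, hm⟩ := exists_mem_Ico_zpow h (by norm_num : (1:ℝ) < 2)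
      refine ⟨-m, fun _ => ⟨by simpa using hm.1, ?_⟩⟩
      have : 1 - -m = m + 1 := by ring
      rw [this]
      exact hm.2
    · exact ⟨0, fun hc => absurd hc h⟩
  choose kpos hkpos using hkex
  set K0 : ℤ := 1 + (Finset.univ.sup fun i : Fin n => (kpos i).toNat) with hK0
  set lev : Fin n → ℤ := fun i => if 0 < s i then kpos i else K0 with hlev
  have hlevK0 : ∀ i, lev i ≤ K0 := by
    intro i
    simp only [hlev]
    split
    · have h1 : (kpos i).toNat ≤ Finset.univ.sup fun i : Fin n => (kpos i).toNat :=
        Finset.le_sup (f := fun i : Fin n => (kpos i).toNat) (Finset.mem_univ i)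
      have h2 := Int.self_le_toNat (kpos i)
      have h3 : ((kpos i).toNat : ℤ) ≤ ((Finset.univ.sup fun i : Fin n => (kpos i).toNat : ℕ) : ℤ) := by
        exact_mod_cast h1
      rw [hK0]
      omega
    · exact le_rfl
  have hlev_s : ∀ i, 0 < s i → (2:ℝ)^(-lev i) ≤ s i := by
    intro i hi
    simp only [hlev, if_pos hi]
    exact (hkpos i hi).1
  have hlev_up : ∀ i, s i < (2:ℝ)^(1 - lev i) := by
    intro i
    by_cases h : 0 < s i
    · simp only [hlev, if_pos h]; exact (hkpos i h).2
    · have : s i = 0 := le_antisymm (not_lt.mp h) (hs0 i)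
      rw [this]
      exact two_zpow_pos _
  have hcovex : ∀ i : Fin n, ∃ (ℓ : ℝ) (aa : Fin d → ℝ), 0 ≤ ℓ ∧ ℓ < (2:ℝ)^(1 - lev i) ∧
      obj i ⊆ hcube d aa ℓ := by
    intro i
    have hε : (0:ℝ) < 2^(1 - lev i) - s i := by linarith [hlev_up i]
    obtain ⟨ℓ, aa, h1, h2, h3⟩ := exists_cover (hbd i) hε
    exact ⟨ℓ, aa, h1, by simp only [hs] at h2 ⊢; linarith, h3⟩
  choose covL covA hcov1 hcov2 hcov3 using hcovex
  set Marked : Fin n → Finset (Cell d) := fun i =>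
    Finset.image (fun e : Fin d → Fin 3 =>
      ((lev i, fun t => ⌊covA i t * (2:ℝ)^(lev i)⌋ + (e t : ℤ)) : Cell d)) Finset.univ
    with hMarked
  have hMarkedcard : ∀ i, (Marked i).card ≤ 3^d := by
    intro i
    refine (Finset.card_image_le).trans ?_
    simp [Finset.card_univ]
  have hMarkedmem : ∀ (i : Fin n) (x : Fin d → ℝ), x ∈ obj i →
      cellOf d (lev i) x ∈ Marked i := by
    intro i x hx
    simp only [hMarked, Finset.mem_image]
    have hdiff : ∀ t, ∃ e : Fin 3, ⌊x t * (2:ℝ)^(lev i)⌋ = ⌊covA i t * (2:ℝ)^(lev i)⌋ + (e : ℤ) := by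
      intro t
      have hc := hcov3 i hx t
      have hp := two_zpow_pos (lev i)
      have hlow : ⌊covA i t * (2:ℝ)^(lev i)⌋ ≤ ⌊x t * (2:ℝ)^(lev i)⌋ :=
        Int.floor_le_floor (mul_le_mul_of_nonneg_right hc.1 hp.le)
      have hup : ⌊x t * (2:ℝ)^(lev i)⌋ ≤ ⌊covA i t * (2:ℝ)^(lev i)⌋ + 2 := by
        have h2 : covL i * (2:ℝ)^(lev i) < 2 := by
          have := mul_lt_mul_of_pos_right (hcov2 i) hp
          calc covL i * (2:ℝ)^(lev i) < (2:ℝ)^(1 - lev i) * (2:ℝ)^(lev i) := this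
          _ = 2 := by
            rw [← zpow_add₀ (by norm_num : (2:ℝ) ≠ 0)]
            norm_num
        have hxc : x t * (2:ℝ)^(lev i) < covA i t * (2:ℝ)^(lev i) + 2 := by
          have := mul_le_mul_of_nonneg_right hc.2 hp.le
          have hd : (covA i t + covL i) * (2:ℝ)^(lev i)
              = covA i t * (2:ℝ)^(lev i) + covL i * (2:ℝ)^(lev i) := by ring
          nlinarith
        have h4 := Int.floor_le_floor hxc.le
        have h5 := Int.floor_add_intCast (covA i t * (2:ℝ)^(lev i)) 2
        push_cast at h5
        rw [h5] at h4
        exact h4.trans (by omega)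
      refine ⟨⟨(⌊x t * (2:ℝ)^(lev i)⌋ - ⌊covA i t * (2:ℝ)^(lev i)⌋).toNat, ?_⟩, ?_⟩
      · omega
      · simp only [Fin.val_mk]
        omega
    choose e he using hdiff
    exact ⟨e, Finset.mem_univ e, by
      simp only [cellOf]
      refine Prod.ext rfl ?_
      funext t
      simp [he t]⟩
  set M : Finset (Cell d) := Finset.univ.biUnion Marked with hM
  have hMcard : M.card ≤ 3^d * n := by
    refine (Finset.card_biUnion_le).trans ?_
    calc ∑ i : Fin n, (Marked i).card ≤ ∑ _i : Fin n, 3^d :=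
      Finset.sum_le_sum fun i _ => hMarkedcard i
    _ = 3^d * n := by simp [mul_comm]
  obtain ⟨L, hL1, hL2, hL3⟩ := decomp (CellLe (d := d)) CellLe.refl
    (fun h1 h2 => h1.trans h2) (fun h1 h2 => h1.antisymm h2)
    (fun h1 h2 => cell_chain h1 h2) M
  -- piercing points for each cell
  have hpierex : ∀ γ : Cell d, ∃ P : Finset (Fin d → ℝ), P.card ≤ c ∧
      ∀ i : Fin n, (obj i ∩ cellSet d γ).Nonempty → (2:ℝ)^(-γ.1) ≤ s i →
        ∃ p ∈ P, p ∈ obj i := by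
    intro γ
    obtain ⟨P, hP1, hP2⟩ := hfat (fun t => (γ.2 t : ℝ) * (2:ℝ)^(-γ.1)) ((2:ℝ)^(-γ.1))
      (two_zpow_pos _)
    refine ⟨P, hP1, fun i hint hside => ?_⟩
    refine hP2 (obj i) (Set.mem_range_self i) ?_ hside
    obtain ⟨y, hy1, hy2⟩ := hint
    exact ⟨y, hy1, cell_subset_hcube d γ hy2⟩
  choose pier hpier1 hpier2 using hpierex
  set Big : (Finset (Cell d) × Cell d) → Fin n → Prop := fun pg w =>
    (∃ γ ∈ Marked w, γ ∈ pg.1 ∧ CellLe pg.2 γ) ∧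
      (obj w ∩ cellSet d pg.2).Nonempty ∧ (2:ℝ)^(-pg.2.1) ≤ s w with hBig
  set Small : (Finset (Cell d) × Cell d) → Fin n → Prop := fun pg w =>
    ∃ γ ∈ Marked w, γ ∈ pg.1 ∧ CellLe γ pg.2 with hSmall
  set hubOr : (Finset (Cell d) × Cell d) → (Fin d → ℝ) → Fin n → Fin n := fun pg q w =>
    if h : ∃ w', Big pg w' ∧ q ∈ obj w' then h.choose else w with hhubOr
  set fch : (Finset (Cell d) × Cell d) → (Fin d → ℝ) → Fin n → Fin n := fun pg q w =>
    if h : ∃ w', Big pg w' ∧ q ∈ obj w' ∧ (obj w ∩ obj w').Nonempty ∧ w' ≠ w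
    then h.choose else w with hfch
  set starE : (Finset (Cell d) × Cell d) → Finset (Fin n × Fin n) := fun pg =>
    (pier pg.2).biUnion fun q =>
      ((Finset.univ.filter (Big pg)).filter fun w => q ∈ obj w).image
        fun w => (hubOr pg q w, w) with hstarE
  set fE : (Finset (Cell d) × Cell d) → Finset (Fin n × Fin n) := fun pg =>
    ((Finset.univ.filter (Small pg)) ×ˢ (pier pg.2)).image
      fun wq => (wq.1, fch pg wq.2 wq.1) with hfE
  set srep : Fin n → Fin n := fun i =>
    (Finset.univ.filter fun j => obj j = obj i).min' ⟨i, by simp⟩ with hsrep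
  set singE : Finset (Fin n × Fin n) :=
    (Finset.univ.filter fun i => s i = 0).image fun i => (i, srep i) with hsingE
  set nodesE : Finset (Fin n × Fin n) :=
    (L.map fun pg => starE pg ∪ fE pg).foldr (· ∪ ·) ∅ with hnodesE
  set E : Finset (Fin n × Fin n) := singE ∪ nodesE with hE
  have hfold_mem : ∀ (ls : List (Finset (Fin n × Fin n))) (x : Fin n × Fin n),
      x ∈ ls.foldr (· ∪ ·) ∅ ↔ ∃ t ∈ ls, x ∈ t := by
    intro ls x
    induction ls with
    | nil => simp
    | cons a l ih => simp [ih]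
  have hsrep_obj : ∀ i : Fin n, obj (srep i) = obj i := by
    intro i
    have := Finset.min'_mem (Finset.univ.filter fun j => obj j = obj i) ⟨i, by simp⟩
    exact (Finset.mem_filter.mp this).2
  have hvalid : ∀ e ∈ E, e.1 ≠ e.2 → (obj e.1 ∩ obj e.2).Nonempty := by
    intro e heE hne12
    rw [hE, Finset.mem_union] at heE
    rcases heE with he | he
    · simp only [hsingE, Finset.mem_image] at he
      obtain ⟨i, _, rfl⟩ := he
      have : obj (i, srep i).2 = obj i := hsrep_obj i
      rw [this, Set.inter_self]
      exact hne i
    · rw [hnodesE, hfold_mem] at he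
      obtain ⟨t, ht, het⟩ := he
      obtain ⟨pg, _, rfl⟩ := List.mem_map.mp ht
      rcases Finset.mem_union.mp het with he | he
      · -- star edge
        simp only [hstarE] at he
        obtain ⟨q, hqP, he⟩ := Finset.mem_biUnion.mp he
        obtain ⟨w, hw, rfl⟩ := Finset.mem_image.mp he
        rcases Finset.mem_filter.mp hw with ⟨hw1, hqw⟩
        have hwBig : Big pg w := (Finset.mem_filter.mp hw1).2
        have hex : ∃ w', Big pg w' ∧ q ∈ obj w' := ⟨w, hwBig, hqw⟩
        have hh : hubOr pg q w = hex.choose := by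
          simp only [hhubOr]
          rw [dif_pos hex]
        exact ⟨q, by rw [hh]; exact hex.choose_spec.2, hqw⟩
      · -- f edge
        simp only [hfE] at he
        obtain ⟨wq, hwq, rfl⟩ := Finset.mem_image.mp he
        by_cases hex : ∃ w', Big pg w' ∧ wq.2 ∈ obj w' ∧ (obj wq.1 ∩ obj w').Nonempty ∧ w' ≠ wq.1
        · have hh : fch pg wq.2 wq.1 = hex.choose := by
            simp only [hfch]
            rw [dif_pos hex]
          rw [hh]
          exact hex.choose_spec.2.2.1
        · have hh : fch pg wq.2 wq.1 = wq.1 := by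
            simp only [hfch]
            rw [dif_neg hex]
          rw [hh] at hne12
          exact absurd rfl hne12
  refine ⟨E, hvalid, ?_, ?_⟩
  · -- 3-hop property
    intro i j hij hint
    obtain ⟨x, hxi, hxj⟩ := hint
    set H := SimpleGraph.fromRel fun a b : Fin n => (a, b) ∈ E with hH
    have hAdj : ∀ a b : Fin n, a ≠ b → ((a, b) ∈ E ∨ (b, a) ∈ E) → H.Adj a b := by
      intro a b hab hmem
      rw [hH, SimpleGraph.fromRel_adj]
      exact ⟨hab, hmem⟩
    have hsing_mem : ∀ u : Fin n, s u = 0 → (u, srep u) ∈ E := by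
      intro u hsu
      rw [hE, Finset.mem_union]
      left
      rw [hsingE, Finset.mem_image]
      exact ⟨u, Finset.mem_filter.mpr ⟨Finset.mem_univ u, hsu⟩, rfl⟩
    have hsrep_eq : ∀ a b : Fin n, obj a = obj b → srep a = srep b := by
      intro a b hab
      have hfe : (Finset.univ.filter fun j => obj j = obj a) =
          (Finset.univ.filter fun j => obj j = obj b) := by
        apply Finset.filter_congr
        intro j _
        rw [hab]
      simp only [hsrep]
      congr 1 <;> first
        | exact hfe
        | exact proof_irrel_heq _ _
    have hsingW : ∀ u v : Fin n, u ≠ v → s u = 0 → s v = 0 → x ∈ obj u → x ∈ obj v →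
        ∃ p : H.Walk u v, p.length ≤ 3 := by
      intro u v huv hsu hsv hxu hxv
      have hobj : obj u = obj v := by
        ext y
        constructor <;> intro hy
        · have hyx := sideLength_zero_subsingleton (hbd u) hsu hy hxu
          rw [hyx]; exact hxv
        · have hyx := sideLength_zero_subsingleton (hbd v) hsv hy hxv
          rw [hyx]; exact hxu
      have hrv : srep v = srep u := hsrep_eq v u hobj.symm
      have hEu : (u, srep u) ∈ E := hsing_mem u hsu
      have hEv : (v, srep u) ∈ E := hrv ▸ hsing_mem v hsv
      by_cases hru : srep u = u
      · refine ⟨SimpleGraph.Walk.cons (hAdj u v huv (Or.inr (hru ▸ hEv)))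
          SimpleGraph.Walk.nil, by simp⟩
      by_cases hrv2 : srep u = v
      · refine ⟨SimpleGraph.Walk.cons (hAdj u v huv (Or.inl (hrv2 ▸ hEu)))
          SimpleGraph.Walk.nil, by simp⟩
      · refine ⟨SimpleGraph.Walk.cons (hAdj u (srep u) (fun hc => hru hc.symm) (Or.inl hEu))
          (SimpleGraph.Walk.cons (hAdj (srep u) v hrv2 (Or.inr hEv))
            SimpleGraph.Walk.nil), by simp⟩
    have hnodes_sub : ∀ pg ∈ L, starE pg ∪ fE pg ⊆ E := by
      intro pg hpg e he
      rw [hE, Finset.mem_union]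
      right
      rw [hnodesE, hfold_mem]
      exact ⟨starE pg ∪ fE pg, List.mem_map_of_mem hpg, he⟩
    have key : ∀ u v : Fin n, u ≠ v → x ∈ obj u → x ∈ obj v → lev v ≤ lev u → 0 < s v →
        ∃ p : H.Walk u v, p.length ≤ 3 := by
      intro u v huv hxu hxv hlvu hsv
      have hγuM : cellOf d (lev u) x ∈ Marked u := hMarkedmem u x hxu
      have hγvM : cellOf d (lev v) x ∈ Marked v := hMarkedmem v x hxv
      have hγuMM : cellOf d (lev u) x ∈ M :=
        Finset.mem_biUnion.mpr ⟨u, Finset.mem_univ u, hγuM⟩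
      have hγvMM : cellOf d (lev v) x ∈ M :=
        Finset.mem_biUnion.mpr ⟨v, Finset.mem_univ v, hγvM⟩
      have hle : CellLe (cellOf d (lev u) x) (cellOf d (lev v) x) :=
        cell_nesting (mem_cellOf d (lev u) x) (mem_cellOf d (lev v) x) hlvu
      obtain ⟨pg, hpgL, hγuP, hγvP, hleu, hlev2⟩ := hL2 _ hγuMM _ hγvMM hle
      have hxg : x ∈ cellSet d pg.2 := hleu.subset (mem_cellOf d (lev u) x)
      have hsidev : (2:ℝ)^(-pg.2.1) ≤ s v := by
        have h1 : (2:ℝ)^(-pg.2.1) ≤ (2:ℝ)^(-(cellOf d (lev v) x).1) := CellLe.side_le hlev2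
        exact h1.trans (hlev_s v hsv)
      have hBigv : Big pg v :=
        ⟨⟨cellOf d (lev v) x, hγvM, hγvP, hlev2⟩, ⟨x, hxv, hxg⟩, hsidev⟩
      have hSmallu : Small pg u := ⟨cellOf d (lev u) x, hγuM, hγuP, hleu⟩
      obtain ⟨q, hqP, hqv⟩ := hpier2 pg.2 v ⟨x, hxv, hxg⟩ hsidev
      have hexf : ∃ w', Big pg w' ∧ q ∈ obj w' ∧ (obj u ∩ obj w').Nonempty ∧ w' ≠ u :=
        ⟨v, hBigv, hqv, ⟨x, hxu, hxv⟩, Ne.symm huv⟩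
      have hfchu : fch pg q u = hexf.choose := by
        simp only [hfch]
        rw [dif_pos hexf]
      obtain ⟨hwBig, hqw, hwint, hwne⟩ := hexf.choose_spec
      have hexh : ∃ w', Big pg w' ∧ q ∈ obj w' := ⟨v, hBigv, hqv⟩
      have hhub : ∀ w'' : Fin n, hubOr pg q w'' = hexh.choose := by
        intro w''
        simp only [hhubOr]
        rw [dif_pos hexh]
      obtain ⟨hhBig, hqh⟩ := hexh.choose_spec
      have hedge1 : (u, hexf.choose) ∈ E := by
        refine hnodes_sub pg hpgL ?_
        refine Finset.mem_union_right _ ?_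
        simp only [hfE]
        refine Finset.mem_image.mpr ⟨(u, q), ?_, ?_⟩
        · exact Finset.mem_product.mpr
            ⟨Finset.mem_filter.mpr ⟨Finset.mem_univ u, hSmallu⟩, hqP⟩
        · show (u, fch pg q u) = (u, hexf.choose)
          rw [hfchu]
      have hedgeStar : ∀ v' : Fin n, Big pg v' → q ∈ obj v' → (hexh.choose, v') ∈ E := by
        intro v' hb hq
        refine hnodes_sub pg hpgL ?_
        refine Finset.mem_union_left _ ?_
        simp only [hstarE]
        refine Finset.mem_biUnion.mpr ⟨q, hqP, ?_⟩
        refine Finset.mem_image.mpr ⟨v', ?_, ?_⟩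
        · exact Finset.mem_filter.mpr ⟨Finset.mem_filter.mpr ⟨Finset.mem_univ v', hb⟩, hq⟩
        · rw [hhub v']
      have hedge2 : (hexh.choose, hexf.choose) ∈ E := hedgeStar _ hwBig hqw
      have hedge3 : (hexh.choose, v) ∈ E := hedgeStar v hBigv hqv
      by_cases hwv : hexf.choose = v
      · exact ⟨SimpleGraph.Walk.cons (hAdj u v huv (Or.inl (hwv ▸ hedge1)))
          SimpleGraph.Walk.nil, by simp⟩
      by_cases hhu : hexh.choose = u
      · exact ⟨SimpleGraph.Walk.cons (hAdj u v huv (Or.inl (hhu ▸ hedge3)))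
          SimpleGraph.Walk.nil, by simp⟩
      by_cases hhw : hexh.choose = hexf.choose
      · refine ⟨SimpleGraph.Walk.cons (hAdj u hexf.choose (Ne.symm hwne) (Or.inl hedge1))
          (SimpleGraph.Walk.cons (hAdj hexf.choose v hwv (Or.inl (hhw ▸ hedge3)))
            SimpleGraph.Walk.nil), by simp⟩
      by_cases hhv : hexh.choose = v
      · refine ⟨SimpleGraph.Walk.cons (hAdj u hexf.choose (Ne.symm hwne) (Or.inl hedge1))
          (SimpleGraph.Walk.cons (hAdj hexf.choose v hwv (Or.inr (hhv ▸ hedge2)))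
            SimpleGraph.Walk.nil), by simp⟩
      · refine ⟨SimpleGraph.Walk.cons (hAdj u hexf.choose (Ne.symm hwne) (Or.inl hedge1))
          (SimpleGraph.Walk.cons (hAdj hexf.choose hexh.choose (fun hc => hhw hc.symm)
            (Or.inr hedge2))
          (SimpleGraph.Walk.cons (hAdj hexh.choose v hhv (Or.inl hedge3))
            SimpleGraph.Walk.nil)), by simp⟩
    by_cases hz : s i = 0 ∧ s j = 0
    · exact hsingW i j hij hz.1 hz.2 hxi hxj
    by_cases hsj : 0 < s j
    · by_cases hlv : lev j ≤ lev i
      · exact key i j hij hxi hxj hlv hsj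
      · have hsi : 0 < s i := by
          by_contra hc
          have hlevi : lev i = K0 := by simp only [hlev, if_neg hc]
          exact hlv (hlevi ▸ hlevK0 j)
        obtain ⟨p, hp⟩ := key j i (Ne.symm hij) hxj hxi (le_of_not_ge hlv) hsi
        exact ⟨p.reverse, by rwa [SimpleGraph.Walk.length_reverse]⟩
    · have hsj0 : s j = 0 := le_antisymm (not_lt.mp hsj) (hs0 j)
      have hsi : 0 < s i := by
        rcases (hs0 i).lt_or_eq with h | h
        · exact h
        · exact absurd ⟨h.symm, hsj0⟩ hz
      have hlevj : lev j = K0 := by simp only [hlev, if_neg hsj]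
      obtain ⟨p, hp⟩ := key j i (Ne.symm hij) hxj hxi (hlevj ▸ hlevK0 i) hsi
      exact ⟨p.reverse, by rwa [SimpleGraph.Walk.length_reverse]⟩
  · -- counting
    have hfold_card : ∀ ls : List (Finset (Fin n × Fin n)),
        (ls.foldr (· ∪ ·) ∅).card ≤ (ls.map Finset.card).sum := by
      intro ls
      induction ls with
      | nil => simp
      | cons a l ih =>
        simp only [List.foldr_cons, List.map_cons, List.sum_cons]
        exact (Finset.card_union_le _ _).trans (by omega)
    have hswap : ∀ {ι : Type} (Lst : List (Finset (Cell d) × Cell d)) (T : Finset ι)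
        (ff : ι → (Finset (Cell d) × Cell d) → ℕ),
        (Lst.map fun pg => ∑ i ∈ T, ff i pg).sum = ∑ i ∈ T, (Lst.map (ff i)).sum := by
      intro ι Lst T ff
      induction Lst with
      | nil => simp
      | cons a l ih => simp [ih, Finset.sum_add_distrib]
    have hmull : ∀ (Lst : List (Finset (Cell d) × Cell d)) (a : ℕ)
        (ff : (Finset (Cell d) × Cell d) → ℕ),
        (Lst.map fun pg => a * ff pg).sum = a * (Lst.map ff).sum := by
      intro Lst a ff
      induction Lst with
      | nil => simp
      | cons x l ih => simp [ih, Nat.mul_add]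
    set ind : Cell d → (Finset (Cell d) × Cell d) → ℕ := fun γ pg =>
      if γ ∈ pg.1 ∧ (CellLe γ pg.2 ∨ CellLe pg.2 γ) then 1 else 0 with hind
    have hind1 : ∀ γ pg, ind γ pg ≤ 1 := by
      intro γ pg
      simp only [hind]
      split <;> omega
    have hind2 : ∀ γ pg, 1 ≤ ind γ pg → γ ∈ pg.1 ∧ (CellLe γ pg.2 ∨ CellLe pg.2 γ) := by
      intro γ pg h
      by_contra hc
      simp only [hind, if_neg hc] at h
      omega
    set Fcnt : Fin n → (Finset (Cell d) × Cell d) → ℕ := fun w pg =>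
      ∑ γ ∈ Marked w, ind γ pg with hFcnt
    have hBigF : ∀ pg, (Finset.univ.filter (Big pg)).card ≤ ∑ w : Fin n, Fcnt w pg := by
      intro pg
      rw [Finset.card_eq_sum_ones]
      refine le_trans (Finset.sum_le_sum (f := fun _ => 1) (g := fun w => Fcnt w pg) ?_)
        (Finset.sum_le_sum_of_subset (Finset.filter_subset _ _))
      intro w hw
      obtain ⟨γ, hγM, hγP, hle⟩ := ((Finset.mem_filter.mp hw).2 : Big pg w).1
      have h1 : ind γ pg = 1 := by
        simp only [hind]
        rw [if_pos ⟨hγP, Or.inr hle⟩]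
      calc 1 = ind γ pg := h1.symm
      _ ≤ Fcnt w pg := Finset.single_le_sum (f := fun γ => ind γ pg) (fun _ _ => Nat.zero_le _) hγM
    have hSmallF : ∀ pg, (Finset.univ.filter (Small pg)).card ≤ ∑ w : Fin n, Fcnt w pg := by
      intro pg
      rw [Finset.card_eq_sum_ones]
      refine le_trans (Finset.sum_le_sum (f := fun _ => 1) (g := fun w => Fcnt w pg) ?_)
        (Finset.sum_le_sum_of_subset (Finset.filter_subset _ _))
      intro w hw
      obtain ⟨γ, hγM, hγP, hle⟩ := ((Finset.mem_filter.mp hw).2 : Small pg w)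
      have h1 : ind γ pg = 1 := by
        simp only [hind]
        rw [if_pos ⟨hγP, Or.inl hle⟩]
      calc 1 = ind γ pg := h1.symm
      _ ≤ Fcnt w pg := Finset.single_le_sum (f := fun γ => ind γ pg) (fun _ _ => Nat.zero_le _) hγM
    have hnodecard : ∀ pg, (starE pg ∪ fE pg).card ≤ 2 * c * ∑ w : Fin n, Fcnt w pg := by
      intro pg
      have h1 : (starE pg).card ≤ c * (Finset.univ.filter (Big pg)).card := by
        simp only [hstarE]
        refine (Finset.card_biUnion_le).trans ?_
        calc ∑ q ∈ pier pg.2,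
            (((Finset.univ.filter (Big pg)).filter fun w => q ∈ obj w).image
              fun w => (hubOr pg q w, w)).card
            ≤ ∑ _q ∈ pier pg.2, (Finset.univ.filter (Big pg)).card :=
              Finset.sum_le_sum fun q _ =>
                (Finset.card_image_le).trans (Finset.card_filter_le _ _)
          _ = (pier pg.2).card * (Finset.univ.filter (Big pg)).card := by
              rw [Finset.sum_const, smul_eq_mul]
          _ ≤ c * (Finset.univ.filter (Big pg)).card :=
              Nat.mul_le_mul_right _ (hpier1 pg.2)
      have h2 : (fE pg).card ≤ (Finset.univ.filter (Small pg)).card * c := by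
        simp only [hfE]
        refine (Finset.card_image_le).trans ?_
        rw [Finset.card_product]
        exact Nat.mul_le_mul_left _ (hpier1 pg.2)
      calc (starE pg ∪ fE pg).card ≤ (starE pg).card + (fE pg).card :=
          Finset.card_union_le _ _
        _ ≤ c * (∑ w : Fin n, Fcnt w pg) + (∑ w : Fin n, Fcnt w pg) * c := by
            refine Nat.add_le_add (h1.trans (Nat.mul_le_mul_left _ (hBigF pg)))
              (h2.trans (Nat.mul_le_mul_right _ (hSmallF pg)))
        _ = 2 * c * ∑ w : Fin n, Fcnt w pg := by ring
    have hsingcard : singE.card ≤ n := by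
      simp only [hsingE]
      refine (Finset.card_image_le).trans ((Finset.card_filter_le _ _).trans (by simp))
    have hnodesEcard : nodesE.card ≤ 2 * c * ∑ w : Fin n, (L.map (Fcnt w)).sum := by
      rw [hnodesE]
      refine (hfold_card _).trans ?_
      rw [List.map_map]
      have hpt : (L.map (Finset.card ∘ fun pg => starE pg ∪ fE pg)).sum ≤
          (L.map fun pg => 2 * c * ∑ w : Fin n, Fcnt w pg).sum := by
        apply List.sum_le_sum
        intro pg _
        exact hnodecard pg
      refine hpt.trans ?_
      rw [hmull L (2 * c) (fun pg => ∑ w : Fin n, Fcnt w pg), hswap L Finset.univ Fcnt]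
    have hγbound : ∀ w : Fin n, (L.map (Fcnt w)).sum ≤ 3^d * (Nat.log 2 M.card + 1) := by
      intro w
      have he : (L.map (Fcnt w)).sum = ∑ γ ∈ Marked w, (L.map (ind γ)).sum :=
        hswap L (Marked w) ind
      rw [he]
      calc ∑ γ ∈ Marked w, (L.map (ind γ)).sum
          ≤ ∑ _γ ∈ Marked w, (Nat.log 2 M.card + 1) :=
            Finset.sum_le_sum fun γ hγ =>
              hL3 γ (Finset.mem_biUnion.mpr ⟨w, Finset.mem_univ w, hγ⟩) (ind γ)
                (hind1 γ) (hind2 γ)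
        _ = (Marked w).card * (Nat.log 2 M.card + 1) := by rw [Finset.sum_const, smul_eq_mul]
        _ ≤ 3^d * (Nat.log 2 M.card + 1) := Nat.mul_le_mul_right _ (hMarkedcard w)
    have hlogmono : Nat.log 2 M.card ≤ Nat.log 2 (3^d * n) := Nat.log_mono_right hMcard
    calc E.card ≤ singE.card + nodesE.card := Finset.card_union_le _ _
      _ ≤ n + 2 * c * ∑ w : Fin n, (L.map (Fcnt w)).sum := Nat.add_le_add hsingcard hnodesEcard
      _ ≤ n + 2 * c * ∑ _w : Fin n, 3^d * (Nat.log 2 M.card + 1) := by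
          refine Nat.add_le_add_left (Nat.mul_le_mul_left _ (Finset.sum_le_sum fun w _ => hγbound w)) _
      _ = n + 2 * c * (n * (3^d * (Nat.log 2 M.card + 1))) := by
          rw [Finset.sum_const, smul_eq_mul]
          simp [Finset.card_univ]
      _ ≤ n + 2 * c * (n * (3^d * (Nat.log 2 (3^d * n) + 1))) := by
          refine Nat.add_le_add_left (Nat.mul_le_mul_left _ (Nat.mul_le_mul_left _
            (Nat.mul_le_mul_left _ (by omega)))) _
      _ = n + 2 * c * 3^d * (Nat.log 2 (3^d * n) + 1) * n := by ring

end FatSpanner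

/-- The intersection graph of any `n` `c`-fat (bounded, nonempty) objects in `ℝ^d`
admits a 3-hop spanner with `O_{d,c}(n log n)` edges. -/
theorem fat_objects_three_hop_spanner (d c : ℕ) :
    ∃ K : ℝ, 0 < K ∧ ∀ (n : ℕ) (obj : Fin n → Set (Fin d → ℝ)),
      (∀ i, (obj i).Nonempty) → (∀ i, Bornology.IsBounded (obj i)) →
      CFat d c (Set.range obj) →
      ∃ H : SimpleGraph (Fin n),
        IsHopSpanner (SimpleGraph.fromRel fun i j => (obj i ∩ obj j).Nonempty) H 3 ∧
        (H.edgeSet.ncard : ℝ) ≤ K * n * Real.log n := by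
  classical
  refine ⟨2*(1 + (2*c*3^d : ℝ)*(2*d+1)) + 2*(2*c*3^d : ℝ) + 1, by positivity, ?_⟩
  intro n obj hne hbd hfat
  obtain ⟨E, hvalid, hhop, hcard⟩ := FatSpanner.main_aux d c n obj hne hbd hfat
  refine ⟨SimpleGraph.fromRel fun a b => (a, b) ∈ E, ⟨?_, ?_⟩, ?_⟩
  · intro a b hab
    rw [SimpleGraph.fromRel_adj] at hab ⊢
    obtain ⟨hne', hmem⟩ := hab
    refine ⟨hne', ?_⟩
    rcases hmem with h | h
    · exact Or.inl (hvalid _ h hne')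
    · exact Or.inr (hvalid _ h (Ne.symm hne'))
  · intro u v huv
    rw [SimpleGraph.fromRel_adj] at huv
    obtain ⟨hne', h | h⟩ := huv
    · exact hhop u v hne' h
    · obtain ⟨p, hp⟩ := hhop v u (Ne.symm hne') h
      exact ⟨p.reverse, by rwa [SimpleGraph.Walk.length_reverse]⟩
  · -- edge count
    have hsub : (SimpleGraph.fromRel fun a b => (a, b) ∈ E).edgeSet ⊆
        ↑(E.image fun p => s(p.1, p.2)) := by
      intro e
      induction e using Sym2.ind with
      | _ a b =>
        intro he
        rw [SimpleGraph.mem_edgeSet, SimpleGraph.fromRel_adj] at he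
        rcases he.2 with h | h
        · exact Finset.mem_coe.mpr (Finset.mem_image.mpr ⟨(a, b), h, rfl⟩)
        · have hswap : s(a, b) = s(b, a) := Sym2.eq_swap
          rw [hswap]
          exact Finset.mem_coe.mpr (Finset.mem_image.mpr ⟨(b, a), h, rfl⟩)
    have h1 : (SimpleGraph.fromRel fun a b => (a, b) ∈ E).edgeSet.ncard ≤ E.card := by
      calc (SimpleGraph.fromRel fun a b => (a, b) ∈ E).edgeSet.ncard
          ≤ (↑(E.image fun p => s(p.1, p.2)) : Set (Sym2 (Fin n))).ncard :=
            Set.ncard_le_ncard hsub (Finset.finite_toSet _)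
        _ = (E.image fun p => s(p.1, p.2)).card := Set.ncard_coe_finset _
        _ ≤ E.card := Finset.card_image_le
    rcases Nat.lt_or_ge n 2 with hn | hn
    · have hzero : (SimpleGraph.fromRel fun a b => (a, b) ∈ E).edgeSet = ∅ := by
        ext e
        induction e using Sym2.ind with
        | _ a b =>
          simp only [SimpleGraph.mem_edgeSet, SimpleGraph.fromRel_adj, Set.mem_empty_iff_false,
            iff_false]
          rintro ⟨hab, -⟩
          have ha := a.isLt
          have hb := b.isLt
          exact hab (Fin.ext (by omega))
      rw [hzero]
      simp only [Set.ncard_empty, Nat.cast_zero]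
      interval_cases n
      · norm_num
      · norm_num
    · -- n ≥ 2
      have hlog2 : (0.6931471803:ℝ) < Real.log 2 := Real.log_two_gt_d9
      have hlogn : Real.log 2 ≤ Real.log n :=
        Real.log_le_log (by norm_num) (by exact_mod_cast hn)
      have hlogpos : (0:ℝ) < Real.log n := lt_of_lt_of_le (by linarith) hlogn
      have h2ln : (1:ℝ) ≤ 2 * Real.log n := by linarith
      have hnatlog : (Nat.log 2 n : ℝ) ≤ 2 * Real.log n := by
        have h2 : ((2:ℕ):ℝ)^(Nat.log 2 n) ≤ (n:ℝ) := by
          exact_mod_cast Nat.pow_log_le_self 2 (by omega)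
        have h3 := Real.log_le_log (by positivity) h2
        rw [Real.log_pow] at h3
        push_cast at h3
        nlinarith [Nat.cast_nonneg (α := ℝ) (Nat.log 2 n), h3, hlog2]
      have hloglog : (Nat.log 2 (3^d * n) : ℝ) ≤ 2*(d:ℝ) + 2 * Real.log n := by
        have hb : Nat.log 2 (3^d * n) ≤ 2*d + Nat.log 2 n := by
          have h2 : n < 2^(Nat.log 2 n + 1) := Nat.lt_pow_succ_log_self (by norm_num) n
          have h1 : 3^d * n < 2^(2*d + Nat.log 2 n + 1) := by
            calc 3^d * n ≤ 4^d * n :=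
                Nat.mul_le_mul_right _ (Nat.pow_le_pow_left (by norm_num) d)
            _ < 4^d * 2^(Nat.log 2 n + 1) := by
                have h4 : 0 < 4^d := by positivity
                exact (mul_lt_mul_iff_right₀ h4).mpr h2
            _ = 2^(2*d + Nat.log 2 n + 1) := by
                rw [show (4:ℕ)^d = 2^(2*d) by rw [pow_mul]; norm_num, ← pow_add]
                ring_nf
          have := Nat.log_lt_of_lt_pow (by positivity : 3^d * n ≠ 0) h1
          omega
        calc (Nat.log 2 (3^d * n) : ℝ) ≤ ((2*d + Nat.log 2 n : ℕ) : ℝ) := by exact_mod_cast hb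
        _ ≤ 2*(d:ℝ) + 2*Real.log n := by push_cast; linarith [hnatlog]
      have hc2 : (E.card:ℝ) ≤ (n:ℝ) + (2*c*3^d:ℝ) * ((Nat.log 2 (3^d * n) : ℝ) + 1) * n := by
        have hcast : ((n + 2 * c * 3^d * (Nat.log 2 (3^d * n) + 1) * n : ℕ) : ℝ) =
            (n:ℝ) + (2*c*3^d:ℝ) * ((Nat.log 2 (3^d * n) : ℝ) + 1) * n := by
          push_cast
          ring
        rw [← hcast]
        exact_mod_cast hcard
      have hc3 : (E.card:ℝ) ≤ (n:ℝ) + (2*c*3^d:ℝ) * ((2*(d:ℝ) + 2*Real.log n) + 1) * n := by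
        refine hc2.trans ?_
        have hA : (0:ℝ) ≤ (2*c*3^d:ℝ) := by positivity
        have hN : (0:ℝ) ≤ (n:ℝ) := Nat.cast_nonneg n
        nlinarith [mul_le_mul_of_nonneg_left hloglog (mul_nonneg hA hN)]
      refine (le_trans (by exact_mod_cast h1) hc3).trans ?_
      set A : ℝ := (2*c*3^d:ℝ) with hA
      set N : ℝ := (n:ℝ) with hN
      set ln : ℝ := Real.log n with hln
      have hA0 : (0:ℝ) ≤ A := by positivity
      have hN0 : (0:ℝ) ≤ N := Nat.cast_nonneg n
      have hkey : (1 + A*(2*(d:ℝ)+1)) * N * 1 ≤ (1 + A*(2*(d:ℝ)+1)) * N * (2*ln) := by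
        refine mul_le_mul_of_nonneg_left h2ln ?_
        positivity
      nlinarith [hkey, mul_nonneg hN0 hlogpos.le, mul_nonneg (mul_nonneg hA0 hN0) hlogpos.le]
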